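/- In ℝ^4, the diagonal conv{0,(1,1,1,1)} of the hypercube [0,1]^4 and the triangle with vertices (0,0,0,1), (0,1,1,0), (1,0,1,0) are disjoint and at Euclidean distance 1/(3√2). -/

import Mathlib

/-- Points of ℝ^4 as elements of Euclidean space. -/
noncomputable def pt4 (x y z w : ℝ) : EuclideanSpace ℝ (Fin 4) := WithLp.toLp 2 ![x, y, z, w]

lemma mem_Q_iff (q : EuclideanSpace ℝ (Fin 4)) :
    q ∈ convexHull ℝ {pt4 0 0 0 1, pt4 0 1 1 0, pt4 1 0 1 0} ↔
      ∃ a b c : ℝ, 0 ≤ a ∧ 0 ≤ b ∧ 0 ≤ c ∧ a + b + c = 1 ∧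
        q = a • pt4 0 0 0 1 + b • pt4 0 1 1 0 + c • pt4 1 0 1 0 := by
  rw [show ({pt4 0 0 0 1, pt4 0 1 1 0, pt4 1 0 1 0} : Set _) =
      insert (pt4 0 0 0 1) {pt4 0 1 1 0, pt4 1 0 1 0} from rfl,
    convexHull_insert ⟨_, Set.mem_insert _ _⟩, convexHull_pair, mem_convexJoin]
  constructor
  · rintro ⟨x, rfl, z, ⟨u, v, hu, hv, huv, rfl⟩, α, β, hα, hβ, hαβ, rfl⟩
    exact ⟨α, β*u, β*v, hα, by positivity, by positivity, by nlinarith,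
      by rw [smul_add, smul_smul, smul_smul]; abel⟩
  · rintro ⟨a, b, c, ha, hb, hc, habc, rfl⟩
    rcases eq_or_lt_of_le (add_nonneg hb hc) with h | h
    · have hb0 : b = 0 := by linarith
      have hc0 : c = 0 := by linarith
      refine ⟨_, rfl, pt4 0 1 1 0, ⟨1, 0, zero_le_one, le_refl _, by ring, by
        rw [one_smul, zero_smul, add_zero]⟩,
        a, b + c, ha, by linarith, by linarith, ?_⟩
      rw [hb0, hc0]; simp
    · refine ⟨_, rfl, (b/(b+c)) • pt4 0 1 1 0 + (c/(b+c)) • pt4 1 0 1 0,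
        ⟨b/(b+c), c/(b+c), by positivity, by positivity, by field_simp, rfl⟩,
        a, b + c, ha, by linarith, by linarith, ?_⟩
      rw [smul_add, smul_smul, smul_smul, mul_div_cancel₀ _ h.ne', mul_div_cancel₀ _ h.ne', add_assoc]

lemma dist_pq (t a b c : ℝ) :
    dist (t • pt4 1 1 1 1) (a • pt4 0 0 0 1 + b • pt4 0 1 1 0 + c • pt4 1 0 1 0) =
      Real.sqrt ((t-c)^2+(t-b)^2+(t-(b+c))^2+(t-a)^2) := by
  rw [EuclideanSpace.dist_eq, Fin.sum_univ_four]
  congr 1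
  simp [pt4, Real.dist_eq, sq_abs]

lemma sqrt_118 : Real.sqrt (1/18) = 1/(3*Real.sqrt 2) := by
  rw [show (1:ℝ)/18 = (1/(3*Real.sqrt 2))^2 by
    rw [div_pow, mul_pow, Real.sq_sqrt (by norm_num : (2:ℝ) ≥ 0)]; norm_num]
  exact Real.sqrt_sq (by positivity)

lemma key (t a b c : ℝ) (habc : a + b + c = 1) :
    1/18 ≤ (t-c)^2+(t-b)^2+(t-(b+c))^2+(t-a)^2 := by
  obtain rfl : a = 1 - b - c := by linarith
  nlinarith [sq_nonneg (4*t - (b+c) - 1), sq_nonneg (b+c-10/18), sq_nonneg (b-5/18), sq_nonneg (c-5/18)]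

lemma pt4_zero : pt4 0 0 0 0 = 0 := by
  ext i; fin_cases i <;> rfl

/-- In ℝ^4, the diagonal conv{0,(1,1,1,1)} of the hypercube [0,1]^4
and the triangle with vertices (0,0,0,1), (0,1,1,0), (1,0,1,0) are disjoint and at
Euclidean distance 1/(3√2). -/
theorem stmt_16 :
    let P := segment ℝ (pt4 0 0 0 0) (pt4 1 1 1 1)
    let Q := convexHull ℝ {pt4 0 0 0 1, pt4 0 1 1 0, pt4 1 0 1 0}
    P ∩ Q = ∅ ∧ sInf (Set.image2 dist P Q) = 1 / (3 * Real.sqrt 2) := by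
  intro P Q
  have hP : ∀ p ∈ P, ∃ t : ℝ, p = t • pt4 1 1 1 1 := by
    rintro p ⟨u, t, hu, ht, hut, rfl⟩
    exact ⟨t, by rw [pt4_zero, smul_zero, zero_add]⟩
  have hlow : ∀ r ∈ Set.image2 dist P Q, 1/(3*Real.sqrt 2) ≤ r := by
    rintro r ⟨p, hp, q, hq, rfl⟩
    obtain ⟨t, rfl⟩ := hP p hp
    obtain ⟨a, b, c, ha, hb, hc, habc, rfl⟩ := (mem_Q_iff q).1 hq
    rw [dist_pq, ← sqrt_118]
    exact Real.sqrt_le_sqrt (key t a b c habc)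
  have hpmem : (7/18 : ℝ) • pt4 1 1 1 1 ∈ P :=
    ⟨11/18, 7/18, by norm_num, by norm_num, by norm_num,
      by rw [pt4_zero, smul_zero, zero_add]⟩
  have hqmem : (4/9 : ℝ) • pt4 0 0 0 1 + (5/18 : ℝ) • pt4 0 1 1 0 + (5/18 : ℝ) • pt4 1 0 1 0 ∈ Q :=
    (mem_Q_iff _).2 ⟨4/9, 5/18, 5/18, by norm_num, by norm_num, by norm_num, by norm_num, rfl⟩
  have hdval : dist ((7/18 : ℝ) • pt4 1 1 1 1)
      ((4/9 : ℝ) • pt4 0 0 0 1 + (5/18 : ℝ) • pt4 0 1 1 0 + (5/18 : ℝ) • pt4 1 0 1 0)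
      = 1/(3*Real.sqrt 2) := by
    rw [dist_pq, ← sqrt_118]
    norm_num
  have hmem : 1/(3*Real.sqrt 2) ∈ Set.image2 dist P Q :=
    hdval ▸ Set.mem_image2_of_mem hpmem hqmem
  have hpos : (0:ℝ) < 1/(3*Real.sqrt 2) := by positivity
  constructor
  · rw [Set.eq_empty_iff_forall_notMem]
    rintro x ⟨hxP, hxQ⟩
    have := hlow (dist x x) (Set.mem_image2_of_mem hxP hxQ)
    rw [dist_self] at this
    linarith
  · exact le_antisymm (csInf_le ⟨_, hlow⟩ hmem) (le_csInf ⟨_, hmem⟩ hlow)
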